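/- Let n ≥ 1, let g be an invertible symmetric n×n real matrix, and let v, a ∈ ℝⁿ be covectors with vᵀ g⁻¹ v = 1 and vᵀ g⁻¹ a = 0; set ω = aᵀ g⁻¹ a, v̂ = g⁻¹ v, â = g⁻¹ a. Let b, m, n ∈ ℝ be such that 1 + mω ≠ 0 and D := (1+b)(1+mω) − n²ω ≠ 0. Define Q = g⁻¹ + b v̂ v̂ᵀ + m â âᵀ + n (v̂ âᵀ + â v̂ᵀ) and Q̂ = g + B v vᵀ + M a aᵀ + N (v aᵀ + a vᵀ), where B = −(b(1+mω) − n²ω)/D, M = (1/(1+mω))·(−m + n²/D), and N = −n/D. Then Q·Q̂ = 1 (the identity matrix); in particular Q is invertible with inverse Q̂. -/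

import Mathlib

open Matrix

/-- The general dragged metric `Q = g⁻¹ + b v̂v̂ᵀ + m ââᵀ + n(v̂âᵀ + âv̂ᵀ)` has covariant
(inverse) form `Q̂ = g + B vvᵀ + M aaᵀ + N(vaᵀ + avᵀ)` with the stated coefficients. -/
theorem general_dragged_metric_inverse
    (n : ℕ) (hn : 1 ≤ n)
    (g : Matrix (Fin n) (Fin n) ℝ) (hsymm : g.IsSymm) (hg : IsUnit g.det)
    (v a : Matrix (Fin n) (Fin 1) ℝ)
    (hv : vᵀ * g⁻¹ * v = 1) (hva : vᵀ * g⁻¹ * a = 0)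
    (ω : ℝ) (hω : aᵀ * g⁻¹ * a = ω • (1 : Matrix (Fin 1) (Fin 1) ℝ))
    (b m nn : ℝ) (hm : 1 + m * ω ≠ 0)
    (D : ℝ) (hD : D = (1 + b) * (1 + m * ω) - nn ^ 2 * ω) (hD0 : D ≠ 0)
    (B M N : ℝ)
    (hB : B = -(b * (1 + m * ω) - nn ^ 2 * ω) / D)
    (hM : M = (1 / (1 + m * ω)) * (-m + nn ^ 2 / D))
    (hN : N = -nn / D) :
    (g⁻¹ + b • ((g⁻¹ * v) * (g⁻¹ * v)ᵀ) + m • ((g⁻¹ * a) * (g⁻¹ * a)ᵀ)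
        + nn • ((g⁻¹ * v) * (g⁻¹ * a)ᵀ + (g⁻¹ * a) * (g⁻¹ * v)ᵀ)) *
      (g + B • (v * vᵀ) + M • (a * aᵀ) + N • (v * aᵀ + a * vᵀ)) = 1 ∧
    IsUnit (g⁻¹ + b • ((g⁻¹ * v) * (g⁻¹ * v)ᵀ) + m • ((g⁻¹ * a) * (g⁻¹ * a)ᵀ)
        + nn • ((g⁻¹ * v) * (g⁻¹ * a)ᵀ + (g⁻¹ * a) * (g⁻¹ * v)ᵀ)).det ∧
    (g⁻¹ + b • ((g⁻¹ * v) * (g⁻¹ * v)ᵀ) + m • ((g⁻¹ * a) * (g⁻¹ * a)ᵀ)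
        + nn • ((g⁻¹ * v) * (g⁻¹ * a)ᵀ + (g⁻¹ * a) * (g⁻¹ * v)ᵀ))⁻¹
      = g + B • (v * vᵀ) + M • (a * aᵀ) + N • (v * aᵀ + a * vᵀ) := by
  have hginv : g⁻¹ᵀ = g⁻¹ := by
    rw [Matrix.transpose_nonsing_inv, hsymm.eq]
  have hgg : g⁻¹ * g = 1 := Matrix.nonsing_inv_mul g hg
  have hTv : (g⁻¹ * v)ᵀ = vᵀ * g⁻¹ := by rw [Matrix.transpose_mul, hginv]
  have hTa : (g⁻¹ * a)ᵀ = aᵀ * g⁻¹ := by rw [Matrix.transpose_mul, hginv]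
  have h1 : (g⁻¹ * v)ᵀ * v = 1 := by rw [hTv]; exact hv
  have h2 : (g⁻¹ * v)ᵀ * a = 0 := by rw [hTa] at *; rw [hTv]; exact hva
  have h3 : (g⁻¹ * a)ᵀ * v = 0 := by
    have := congrArg Matrix.transpose hva
    simp only [Matrix.transpose_mul, Matrix.transpose_transpose, hginv,
      Matrix.transpose_one, Matrix.transpose_zero, Matrix.mul_assoc] at this
    rw [hTa, Matrix.mul_assoc]; exact this
  have h4 : (g⁻¹ * a)ᵀ * a = ω • 1 := by rw [hTa]; exact hω
  have h5 : (g⁻¹ * v)ᵀ * g = vᵀ := by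
    rw [hTv, Matrix.mul_assoc, hgg, Matrix.mul_one]
  have h6 : (g⁻¹ * a)ᵀ * g = aᵀ := by
    rw [hTa, Matrix.mul_assoc, hgg, Matrix.mul_one]
  set vh := g⁻¹ * v with hvh
  set ah := g⁻¹ * a with hah
  -- inner contraction lemmas
  have kvv : ∀ x : Matrix (Fin 1) (Fin n) ℝ, vhᵀ * (v * x) = x := by
    intro x; rw [← Matrix.mul_assoc, h1, Matrix.one_mul]
  have kva : ∀ x : Matrix (Fin 1) (Fin n) ℝ, vhᵀ * (a * x) = 0 := by
    intro x; rw [← Matrix.mul_assoc, h2, Matrix.zero_mul]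
  have kav : ∀ x : Matrix (Fin 1) (Fin n) ℝ, ahᵀ * (v * x) = 0 := by
    intro x; rw [← Matrix.mul_assoc, h3, Matrix.zero_mul]
  have kaa : ∀ x : Matrix (Fin 1) (Fin n) ℝ, ahᵀ * (a * x) = ω • x := by
    intro x; rw [← Matrix.mul_assoc, h4, Matrix.smul_mul, Matrix.one_mul]
  have gvv : ∀ x : Matrix (Fin 1) (Fin n) ℝ, g⁻¹ * (v * x) = vh * x := by
    intro x; rw [← Matrix.mul_assoc, hvh]
  have gaa : ∀ x : Matrix (Fin 1) (Fin n) ℝ, g⁻¹ * (a * x) = ah * x := by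
    intro x; rw [← Matrix.mul_assoc, hah]
  have key : (g⁻¹ + b • (vh * vhᵀ) + m • (ah * ahᵀ)
        + nn • (vh * ahᵀ + ah * vhᵀ)) *
      (g + B • (v * vᵀ) + M • (a * aᵀ) + N • (v * aᵀ + a * vᵀ)) = 1 := by
    simp only [Matrix.add_mul, Matrix.mul_add, Matrix.smul_mul, Matrix.mul_smul,
      Matrix.mul_assoc, h5, h6, kvv, kva, kav, kaa, gvv, gaa, hgg,
      Matrix.mul_zero, Matrix.zero_mul, smul_zero, Matrix.mul_one,
      smul_add, smul_smul]
    have e1 : B + (b + (b * B + nn * (N * ω))) = 0 := by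
      have hBD : B * D = -(b * (1 + m * ω) - nn ^ 2 * ω) := by rw [hB, div_mul_cancel₀ _ hD0]
      have hND : N * D = -nn := by rw [hN, div_mul_cancel₀ _ hD0]
      have hprod : (B + (b + (b * B + nn * (N * ω)))) * D = 0 := by
        linear_combination (1 + b) * hBD + nn * ω * hND + b * hD
      exact (mul_eq_zero.mp hprod).resolve_right hD0
    have e2 : N + (b * N + (nn * (M * ω) + nn)) = 0 := by
      subst hD hM hN; field_simp; ring
    have e3 : N + (m * (N * ω) + (nn * B + nn)) = 0 := by
      subst hD hB hN; field_simp; ring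
    have e4 : M + (m + (m * (M * ω) + nn * N)) = 0 := by
      subst hD hM hN; field_simp; ring
    match_scalars
    all_goals linarith [e1, e2, e3, e4]
  refine ⟨key, Matrix.isUnit_det_of_right_inverse key, Matrix.inv_eq_right_inv key⟩
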